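/- arXiv:1405.7747 — 8 statements merged into one kernel-verified Lean document; each statement's English description precedes it below -/
import Mathlib

section
/- Let H ≥ 1, let n_1,…,n_H be positive reals with Σ_h n_h = 1, let A > 0, R > 0, s > 0, and f_1,…,f_H ∈ ℝ. Then: (i) there exists a unique x ∈ ℝ such that Σ_{h=1}^{H} n_h·max{0, (f_h − R·x)/A + s} = s; (ii) if x_U denotes the unique solution of the unconstrained clearing equation Σ_h n_h·((f_h − R·x)/A + s) = s, then x ≥ x_U, with strict inequality whenever (f_h − R·x_U)/A + s < 0 for some h. -/
/-- Under the uptick rule, the constrained market clearing equation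
`∑ h, n h * max 0 ((f h - R*x)/A + s) = s` has a unique solution `x`, which is
at least as large as the unconstrained clearing deviation `x_U`, and strictly
larger whenever some trader type would go short at `x_U`. -/
theorem ared_constrained_clearing
    (H : ℕ) (hH : 1 ≤ H)
    (n f : Fin H → ℝ)
    (hn : ∀ h, 0 < n h) (hsum : ∑ h, n h = 1)
    (A R s : ℝ) (hA : 0 < A) (hR : 0 < R) (hs : 0 < s) :
    (∃! x : ℝ, ∑ h, n h * max 0 ((f h - R * x) / A + s) = s) ∧
      ∀ x xU : ℝ,
        (∑ h, n h * max 0 ((f h - R * x) / A + s) = s) →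
        (∑ h, n h * ((f h - R * xU) / A + s) = s) →
        xU ≤ x ∧ ((∃ h, (f h - R * xU) / A + s < 0) → xU < x) := by
  haveI : Nonempty (Fin H) := ⟨⟨0, hH⟩⟩
  set g : Fin H → ℝ → ℝ := fun h x => (f h - R * x) / A + s with hg
  set d : ℝ → ℝ := fun x => ∑ h, n h * max 0 (g h x) with hd
  -- monotonicity of g in x (reversed)
  have gmono : ∀ {z y : ℝ}, z ≤ y → ∀ h, g h y ≤ g h z := by
    intro z y hzy h
    simp only [hg]
    gcongr
  have gstrict : ∀ {z y : ℝ}, z < y → ∀ h, g h y < g h z := by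
    intro z y hzy h
    simp only [hg]
    have h1 : f h - R * y < f h - R * z := by nlinarith
    have h2 : (f h - R * y) / A < (f h - R * z) / A :=
      (div_lt_div_iff_of_pos_right hA).mpr h1
    linarith
  -- antitonicity of d
  have dmono : ∀ {z y : ℝ}, z ≤ y → d y ≤ d z := by
    intro z y hzy
    apply Finset.sum_le_sum
    intro h _
    exact mul_le_mul_of_nonneg_left (max_le_max le_rfl (gmono hzy h)) (hn h).le
  -- strict antitonicity where d is positive
  have dstrict : ∀ {z y : ℝ}, z < y → 0 < d y → d y < d z := by
    intro z y hzy hpos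
    have hex : ∃ h, 0 < g h y := by
      by_contra hc
      push_neg at hc
      have : d y = 0 := by
        simp only [hd]
        apply Finset.sum_eq_zero
        intro h _
        rw [max_eq_left (hc h)]
        ring
      linarith
    obtain ⟨h0, hh0⟩ := hex
    apply Finset.sum_lt_sum
    · intro h _
      exact mul_le_mul_of_nonneg_left (max_le_max le_rfl (gmono hzy.le h)) (hn h).le
    · refine ⟨h0, Finset.mem_univ _, ?_⟩
      apply mul_lt_mul_of_pos_left _ (hn h0)
      calc max 0 (g h0 y) = g h0 y := max_eq_right hh0.le
        _ < g h0 z := gstrict hzy h0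
        _ ≤ max 0 (g h0 z) := le_max_right _ _
  -- continuity of d
  have dcont : Continuous d := by
    apply continuous_finset_sum
    intro i _
    exact continuous_const.mul (continuous_const.max
      (((continuous_const.sub (continuous_const.mul continuous_id)).div_const A).add
        continuous_const))
  -- endpoints for IVT
  set x0 : ℝ := (Finset.univ.inf' Finset.univ_nonempty f) / R with hx0def
  set x1 : ℝ := (Finset.univ.sup' Finset.univ_nonempty f + A * s) / R with hx1def
  have hx01 : x0 ≤ x1 := by
    rw [hx0def, hx1def]
    gcongr
    have h1 : Finset.univ.inf' Finset.univ_nonempty f ≤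
        Finset.univ.sup' Finset.univ_nonempty f := by
      obtain ⟨h⟩ := (inferInstance : Nonempty (Fin H))
      exact le_trans (Finset.inf'_le _ (Finset.mem_univ h))
        (Finset.le_sup' _ (Finset.mem_univ h))
    nlinarith
  have hdx0 : s ≤ d x0 := by
    calc s = ∑ h, n h * s := by rw [← Finset.sum_mul, hsum, one_mul]
      _ ≤ d x0 := by
          apply Finset.sum_le_sum
          intro h _
          apply mul_le_mul_of_nonneg_left _ (hn h).le
          apply le_max_of_le_right
          have hRx0 : R * x0 = Finset.univ.inf' Finset.univ_nonempty f := by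
            rw [hx0def]; field_simp
          have hfh : R * x0 ≤ f h := by
            rw [hRx0]; exact Finset.inf'_le _ (Finset.mem_univ h)
          have : 0 ≤ (f h - R * x0) / A := div_nonneg (by linarith) hA.le
          simp only [hg]; linarith
  have hdx1 : d x1 ≤ s := by
    have : d x1 = 0 := by
      apply Finset.sum_eq_zero
      intro h _
      have hRx1 : R * x1 = Finset.univ.sup' Finset.univ_nonempty f + A * s := by
        rw [hx1def]; field_simp
      have hfh : f h ≤ Finset.univ.sup' Finset.univ_nonempty f :=
        Finset.le_sup' _ (Finset.mem_univ h)
      have hneg : g h x1 ≤ 0 := by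
        simp only [hg]
        have h2 : (f h - R * x1) / A ≤ -s := by
          rw [div_le_iff₀ hA]
          nlinarith
        linarith
      rw [max_eq_left hneg, mul_zero]
    linarith
  -- existence via IVT
  obtain ⟨x, -, hx⟩ := intermediate_value_Icc' hx01 dcont.continuousOn ⟨hdx1, hdx0⟩
  constructor
  · refine ⟨x, hx, ?_⟩
    intro y hy
    have hy' : d y = s := hy
    by_contra hne
    rcases lt_or_gt_of_ne hne with hlt | hgt
    · have := dstrict hlt (by rw [hx]; exact hs)
      rw [hx, hy'] at this
      exact lt_irrefl s this
    · have := dstrict hgt (by rw [hy']; exact hs)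
      rw [hx, hy'] at this
      exact lt_irrefl s this
  · intro z zU hz hzU
    have hz' : d z = s := hz
    have hzU' : ∑ h, n h * g h zU = s := hzU
    have hdU : s ≤ d zU := by
      rw [← hzU']
      apply Finset.sum_le_sum
      intro h _
      exact mul_le_mul_of_nonneg_left (le_max_right _ _) (hn h).le
    have hle : zU ≤ z := by
      by_contra hc
      push_neg at hc
      have := dstrict hc (lt_of_lt_of_le hs hdU)
      rw [hz'] at this
      linarith
    refine ⟨hle, ?_⟩
    rintro ⟨h0, hh0⟩
    have hstrict : s < d zU := by
      rw [← hzU']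
      apply Finset.sum_lt_sum
      · intro h _
        exact mul_le_mul_of_nonneg_left (le_max_right _ _) (hn h).le
      · refine ⟨h0, Finset.mem_univ _, ?_⟩
        apply mul_lt_mul_of_pos_left _ (hn h0)
        calc g h0 zU < 0 := hh0
          _ ≤ max 0 (g h0 zU) := le_max_left _ _
    rcases lt_or_eq_of_le hle with h | h
    · exact h
    · rw [h, hz'] at hstrict
      exact absurd hstrict (lt_irrefl s)
end

section
/- Let R > 1, 0 ≤ v < 1, R < g < 2R − v, and C > 0. For β ≥ 0 define m̄⁰(β) = tanh(−β·C/2) and λ⁰(β) = ((1 + m̄⁰(β))·v + (1 − m̄⁰(β))·g)/(2R). Then λ⁰ is strictly increasing in β, and λ⁰(β) = 1 if and only if β = β_TR := (1/C)·log((R−v)/(g−R)) > 0; moreover λ⁰(β) < 1 for 0 ≤ β < β_TR and λ⁰(β) > 1 for β > β_TR. -/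
lemma my_tanh_eq (x : ℝ) :
    Real.tanh x = (Real.exp (2*x) - 1) / (Real.exp (2*x) + 1) := by
  rw [Real.tanh_eq_sinh_div_cosh, Real.sinh_eq, Real.cosh_eq,
    show (2:ℝ)*x = x + x by ring, Real.exp_add, Real.exp_neg]
  have h := Real.exp_ne_zero x
  have h2 : Real.exp x * Real.exp x + 1 ≠ 0 := by positivity
  field_simp

lemma my_tanh_lt (x y : ℝ) (h : x < y) : Real.tanh x < Real.tanh y := by
  rw [my_tanh_eq, my_tanh_eq]
  have ha : (0:ℝ) < Real.exp (2*x) := Real.exp_pos _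
  have hb : (0:ℝ) < Real.exp (2*y) := Real.exp_pos _
  have hab : Real.exp (2*x) < Real.exp (2*y) := Real.exp_lt_exp.2 (by linarith)
  rw [div_lt_div_iff₀ (by linarith) (by linarith)]
  nlinarith

/-- The transcritical bifurcation value in Lemma 3: the nonzero eigenvalue
`λ⁰(β) = ((1+tanh(-βC/2))v + (1-tanh(-βC/2))g)/(2R)` at the fundamental
equilibrium is strictly increasing in `β ≥ 0`, crosses the value 1 exactly at
`β_TR = (1/C) log((R-v)/(g-R)) > 0`, being smaller than 1 before and larger
than 1 after. -/
theorem ared_transcritical_value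
    (R v g C : ℝ) (hR : 1 < R) (hv0 : 0 ≤ v) (hv1 : v < 1)
    (hgR : R < g) (hg2 : g < 2 * R - v) (hC : 0 < C)
    (lam : ℝ → ℝ)
    (hlam : ∀ β, lam β =
      ((1 + Real.tanh (-β * C / 2)) * v +
        (1 - Real.tanh (-β * C / 2)) * g) / (2 * R))
    (βTR : ℝ) (hβTR : βTR = (1 / C) * Real.log ((R - v) / (g - R))) :
    StrictMonoOn lam (Set.Ici 0) ∧
      0 < βTR ∧
      (∀ β : ℝ, 0 ≤ β → (lam β = 1 ↔ β = βTR)) ∧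
      (∀ β : ℝ, 0 ≤ β → β < βTR → lam β < 1) ∧
      (∀ β : ℝ, βTR < β → 1 < lam β) := by
  have hR0 : (0:ℝ) < 2 * R := by linarith
  have hgv : 0 < g - v := by linarith
  -- rewrite lam using T β = tanh (β*C/2)
  have hlam' : ∀ β, lam β =
      ((1 - Real.tanh (β * C / 2)) * v + (1 + Real.tanh (β * C / 2)) * g) / (2*R) := by
    intro β
    rw [hlam β, show -β * C / 2 = -(β * C / 2) by ring, Real.tanh_neg]
    ring_nf
  set t : ℝ := (2*R - v - g) / (g - v) with ht
  -- the comparison characterization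
  have hlt : ∀ β, (lam β < 1 ↔ Real.tanh (β * C / 2) < t) := by
    intro β
    rw [hlam' β, div_lt_one hR0, ht, lt_div_iff₀ hgv]
    constructor <;> intro h <;> nlinarith
  have hgt : ∀ β, (1 < lam β ↔ t < Real.tanh (β * C / 2)) := by
    intro β
    rw [hlam' β, lt_div_iff₀ hR0, ht, div_lt_iff₀ hgv]
    constructor <;> intro h <;> nlinarith
  -- value at βTR
  have ha1 : (1:ℝ) < (R - v) / (g - R) := by
    rw [lt_div_iff₀ (by linarith : (0:ℝ) < g - R)]; linarith
  have hβC : βTR * C = Real.log ((R - v) / (g - R)) := by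
    rw [hβTR]; field_simp
  have hexp : Real.exp (2 * (βTR * C / 2)) = (R - v) / (g - R) := by
    rw [show 2 * (βTR * C / 2) = βTR * C by ring, hβC,
      Real.exp_log (by linarith : (0:ℝ) < (R - v) / (g - R))]
  have htval : Real.tanh (βTR * C / 2) = t := by
    rw [my_tanh_eq, hexp, ht]
    rw [div_eq_div_iff (by positivity) (by positivity)]
    have hgR0 : g - R ≠ 0 := by intro h; linarith
    field_simp
    ring
  have hβTRpos : 0 < βTR := by
    rw [hβTR]
    exact mul_pos (by positivity) (Real.log_pos ha1)
  -- strict monotonicity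
  have hmono : StrictMonoOn lam (Set.Ici 0) := by
    intro a _ b _ hab
    rw [hlam' a, hlam' b, div_lt_div_iff₀ hR0 hR0]
    have h2 := my_tanh_lt (a * C / 2) (b * C / 2) (by nlinarith)
    nlinarith [mul_pos (mul_pos (sub_pos.2 h2) hgv) hR0]
  refine ⟨hmono, hβTRpos, ?_, ?_, ?_⟩
  · intro β hβ
    constructor
    · intro h
      rcases lt_trichotomy β βTR with hc | hc | hc
      · exfalso
        have := (hlt β).2 (htval ▸ my_tanh_lt _ _ (by nlinarith))
        linarith
      · exact hc
      · exfalso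
        have := (hgt β).2 (htval ▸ my_tanh_lt _ _ (by nlinarith))
        linarith
    · intro h
      subst h
      rw [hlam' β, htval, ht]
      field_simp
      ring
  · intro β _ hβlt
    exact (hlt β).2 (htval ▸ my_tanh_lt _ _ (by nlinarith))
  · intro β hβlt
    exact (hgt β).2 (htval ▸ my_tanh_lt _ _ (by nlinarith))
end

section
/- Let R > 1, 0 ≤ v < 1, R < g < 2R − v, A > 0, s > 0, C > 0 and β > 0. Set m̄ = 1 − 2(R−v)/(g−v), x_LP = A·s/(2(R−1)), β_TR = (1/C)·log((R−v)/(g−R)), and β_LP = β_TR·(1 + A·s²·(g−v)/(4C(R−1)))^{−1}. Then the equilibrium equation tanh(−(β/2)·((−(R−1)·x + A·s)·((g−v)/A)·x + C)) = m̄ in the unknown x ∈ ℝ has: no real solution if 0 < β < β_LP; the unique solution x = x_LP if β = β_LP; and exactly the two solutions x^{(±)} = x_LP ± sqrt((x_LP² + A·C/((R−1)(g−v)))·(1 − β_LP/β)) if β > β_LP. -/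
private lemma tanh_inj' (a b : ℝ) (h : Real.tanh a = Real.tanh b) : a = b := by
  rw [Real.tanh_eq_sinh_div_cosh, Real.tanh_eq_sinh_div_cosh,
    div_eq_div_iff (Real.cosh_pos a).ne' (Real.cosh_pos b).ne'] at h
  have h2 : Real.sinh (a - b) = 0 := by rw [Real.sinh_sub]; linarith
  have := Real.sinh_injective (h2.trans Real.sinh_zero.symm)
  linarith

set_option maxHeartbeats 1600000 in
/-- The saddle-node (limit point) bifurcation of Lemma 3: the non-fundamental
equilibrium equation has no solution for `β < β_LP`, the single solution
`x_LP` at `β = β_LP`, and exactly the two solutions `x^{(±)}` for `β > β_LP`. -/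
theorem ared_saddle_node
    (R v g A s C β : ℝ) (hR : 1 < R) (hv0 : 0 ≤ v) (hv1 : v < 1)
    (hgR : R < g) (hg2 : g < 2 * R - v)
    (hA : 0 < A) (hs : 0 < s) (hC : 0 < C) (hβ : 0 < β)
    (mbar xLP βTR βLP : ℝ)
    (hmbar : mbar = 1 - 2 * (R - v) / (g - v))
    (hxLP : xLP = A * s / (2 * (R - 1)))
    (hβTR : βTR = (1 / C) * Real.log ((R - v) / (g - R)))
    (hβLP : βLP = βTR * (1 + A * s ^ 2 * (g - v) / (4 * C * (R - 1)))⁻¹) :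
    (β < βLP → ¬ ∃ x : ℝ,
        Real.tanh (-(β / 2) *
          ((-(R - 1) * x + A * s) * ((g - v) / A) * x + C)) = mbar) ∧
    (β = βLP → ∀ x : ℝ,
        Real.tanh (-(β / 2) *
          ((-(R - 1) * x + A * s) * ((g - v) / A) * x + C)) = mbar ↔
        x = xLP) ∧
    (βLP < β → ∀ x : ℝ,
        Real.tanh (-(β / 2) *
          ((-(R - 1) * x + A * s) * ((g - v) / A) * x + C)) = mbar ↔
        (x = xLP + Real.sqrt ((xLP ^ 2 + A * C / ((R - 1) * (g - v))) *
            (1 - βLP / β)) ∨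
         x = xLP - Real.sqrt ((xLP ^ 2 + A * C / ((R - 1) * (g - v))) *
            (1 - βLP / β)))) := by
  have hgv : 0 < g - v := by linarith
  have hgRp : 0 < g - R := by linarith
  have hRv : 0 < R - v := by linarith
  have hR1 : 0 < R - 1 := by linarith
  set r : ℝ := (R - v) / (g - R) with hr
  have hr1 : 1 < r := (one_lt_div hgRp).mpr (by linarith)
  have hr0 : 0 < r := lt_trans one_pos hr1
  set t : ℝ := -(1/2) * Real.log r with ht
  have hexp : Real.exp t ^ 2 = r⁻¹ := by
    rw [pow_two, ← Real.exp_add]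
    have h2t : t + t = -Real.log r := by rw [ht]; ring
    rw [h2t, Real.exp_neg, Real.exp_log hr0]
  have key : Real.tanh t = (Real.exp t ^ 2 - 1) / (Real.exp t ^ 2 + 1) := by
    have he := Real.exp_pos t
    rw [Real.tanh_eq_sinh_div_cosh, Real.sinh_eq, Real.cosh_eq, Real.exp_neg]
    field_simp
  have hmt : mbar = Real.tanh t := by
    rw [key, hexp, hr, inv_div, hmbar]
    have hd : (0:ℝ) < (g - R) / (R - v) + 1 := by positivity
    field_simp
    ring
  have hlog : 0 < Real.log r := Real.log_pos hr1
  have hβTRpos : 0 < βTR := by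
    rw [hβTR]; exact mul_pos (by positivity) hlog
  have hK : (0:ℝ) < 1 + A * s ^ 2 * (g - v) / (4 * C * (R - 1)) := by positivity
  have hβLPpos : 0 < βLP := by
    rw [hβLP]; exact mul_pos hβTRpos (inv_pos.mpr hK)
  have hβTReq : βTR = βLP * (1 + A * s ^ 2 * (g - v) / (4 * C * (R - 1))) := by
    rw [hβLP]; field_simp
  have hlogr : Real.log r = C * βTR := by
    rw [hβTR]; field_simp
  set D : ℝ := xLP ^ 2 + A * C / ((R - 1) * (g - v)) with hD
  clear_value D
  have hDpos : 0 < D := by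
    have h1 : 0 < A * C / ((R - 1) * (g - v)) :=
      div_pos (by positivity) (mul_pos hR1 hgv)
    rw [hD]; nlinarith [sq_nonneg xLP]
  have main : ∀ x : ℝ,
      (Real.tanh (-(β / 2) * ((-(R - 1) * x + A * s) * ((g - v) / A) * x + C))
        = mbar) ↔ (x - xLP) ^ 2 = D * (1 - βLP / β) := by
    intro x
    rw [hmt]
    have hlin : -(β / 2) * ((-(R - 1) * x + A * s) * ((g - v) / A) * x + C) - t
        = (β * (R - 1) * (g - v) / (2 * A)) *
            ((x - xLP) ^ 2 - D * (1 - βLP / β)) := by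
      rw [ht, hlogr, hβTReq, hD, hxLP]
      field_simp
      ring
    constructor
    · intro h
      have harg := tanh_inj' _ _ h
      have h0 : (β * (R - 1) * (g - v) / (2 * A)) *
          ((x - xLP) ^ 2 - D * (1 - βLP / β)) = 0 := by
        rw [← hlin, harg, sub_self]
      have hc : β * (R - 1) * (g - v) / (2 * A) ≠ 0 := by positivity
      have := (mul_eq_zero.mp h0).resolve_left hc
      linarith
    · intro h
      congr 1
      have : (x - xLP) ^ 2 - D * (1 - βLP / β) = 0 := by rw [h, sub_self]
      have h0 : -(β / 2) * ((-(R - 1) * x + A * s) * ((g - v) / A) * x + C) - t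
          = 0 := by rw [hlin, this, mul_zero]
      linarith
  refine ⟨?_, ?_, ?_⟩
  · intro hlt ⟨x, hx⟩
    rw [main x] at hx
    have h1 : 1 < βLP / β := (one_lt_div hβ).mpr hlt
    have : D * (1 - βLP / β) < 0 := mul_neg_of_pos_of_neg hDpos (by linarith)
    linarith [sq_nonneg (x - xLP)]
  · intro heq x
    rw [main x]
    have h1 : βLP / β = 1 := by rw [← heq, div_self hβ.ne']
    rw [h1, sub_self, mul_zero, pow_eq_zero_iff (two_ne_zero), sub_eq_zero]
  · intro hlt x
    rw [main x]
    have hMpos : 0 < D * (1 - βLP / β) :=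
      mul_pos hDpos (by have := (div_lt_one hβ).mpr hlt; linarith)
    set M : ℝ := D * (1 - βLP / β) with hM
    clear_value M
    have habs : (x - xLP) ^ 2 = M ↔
        x - xLP = Real.sqrt M ∨ x - xLP = -Real.sqrt M := by
      constructor
      · intro h
        have h' : |x - xLP| = Real.sqrt M := by
          rw [← Real.sqrt_sq_eq_abs, h]
        exact (abs_eq (Real.sqrt_nonneg M)).mp h'
      · rintro (h | h) <;> rw [h]
        · exact Real.sq_sqrt hMpos.le
        · rw [neg_pow, ← neg_pow]; simpa using Real.sq_sqrt hMpos.le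
    rw [habs]
    exact or_congr (by constructor <;> intro h <;> linarith)
      (by constructor <;> intro h <;> linarith)
end

section
/- Let R > 1, 0 ≤ v < 1, g > 2R − v human, and C > 0. Then for every β ≥ 0, λ⁰(β) = ((1 + tanh(−βC/2))·v + (1 − tanh(−βC/2))·g)/(2R) > 1; i.e., the fundamental equilibrium is unstable for every intensity of choice. -/
/-- Part 3 of Lemma 3 (case `g > 2R - v`): the nonzero eigenvalue at the
fundamental equilibrium exceeds 1 for every intensity of choice `β ≥ 0`, so
the fundamental equilibrium is unstable for every `β`. -/
theorem ared_fundamental_unstable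
    (R v g C : ℝ) (hR : 1 < R) (hv0 : 0 ≤ v) (hv1 : v < 1)
    (hg : g > 2 * R - v) (hC : 0 < C) :
    ∀ β : ℝ, 0 ≤ β →
      ((1 + Real.tanh (-β * C / 2)) * v +
        (1 - Real.tanh (-β * C / 2)) * g) / (2 * R) > 1 := by
  intro β hβ
  have ht : Real.tanh (-β * C / 2) ≤ 0 := by
    rw [Real.tanh_eq_sinh_div_cosh]
    apply div_nonpos_of_nonpos_of_nonneg
    · have : -β * C / 2 ≤ 0 := by nlinarith
      simpa using Real.sinh_le_sinh.mpr this
    · exact (Real.cosh_pos _).le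
  rw [gt_iff_lt, lt_div_iff₀ (by linarith)]
  nlinarith [mul_nonneg (neg_nonneg.mpr ht) (by linarith : (0:ℝ) ≤ g - v)]
end

section
/- Let R > 1, g > R², 0 ≤ v < g, A > 0, s ≥ 0, C > 0 and x₀ > 0, and define x_t = x₀·(g/R)^t for t ≥ 0. Then x_t → +∞ as t → ∞, and for every t ≥ 1 the switching quantity (R·x_{t−1} − x_t − A·s)·((g−v)/A)·x_{t−1} is strictly negative, in particular strictly less than C. Hence, in the limit of infinite intensity of choice, an orbit starting at x₀ > 0 with all traders being chartists never triggers a switch to the fundamental strategy, and the price deviation diverges. -/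
/-- Part 4 of Lemma 3 (unbounded dynamics for `g > R²`): along the orbit
`x_t = x₀ (g/R)^t` with `x₀ > 0`, the price deviation diverges to `+∞` and the
switching quantity `(R x_{t-1} - x t - As)((g-v)/A) x_{t-1}` stays strictly
negative (in particular below `C`), so in the limit of infinite intensity of
choice all traders remain chartists forever. -/
theorem ared_unbounded_dynamics
    (R g v A s C x0 : ℝ) (hR : 1 < R) (hg : R ^ 2 < g)
    (hv0 : 0 ≤ v) (hvg : v < g) (hA : 0 < A) (hs : 0 ≤ s) (hC : 0 < C)
    (hx0 : 0 < x0)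
    (x : ℕ → ℝ) (hx : ∀ t : ℕ, x t = x0 * (g / R) ^ t) :
    Filter.Tendsto x Filter.atTop Filter.atTop ∧
      ∀ t : ℕ, 1 ≤ t →
        (R * x (t - 1) - x t - A * s) * ((g - v) / A) * x (t - 1) < 0 ∧
        (R * x (t - 1) - x t - A * s) * ((g - v) / A) * x (t - 1) < C := by
  have hR0 : (0 : ℝ) < R := lt_trans one_pos hR
  have hratio : 1 < g / R := by
    rw [lt_div_iff₀ hR0]
    nlinarith
  constructor
  · have h := (tendsto_pow_atTop_atTop_of_one_lt hratio).const_mul_atTop hx0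
    refine h.congr fun t => (hx t).symm
  · intro t ht
    have hxpos : ∀ n : ℕ, 0 < x n := fun n => by
      rw [hx n]; positivity
    have hstep : x t = (g / R) * x (t - 1) := by
      obtain ⟨k, rfl⟩ := Nat.exists_eq_add_of_le ht
      simp only [hx, Nat.add_sub_cancel_left]
      rw [pow_add, pow_one]
      ring
    have hneg : R * x (t - 1) - x t - A * s < 0 := by
      rw [hstep]
      have hx1 := hxpos (t - 1)
      have : R < g / R := by rw [lt_div_iff₀ hR0]; nlinarith
      nlinarith
    have h2 : 0 < (g - v) / A := div_pos (by linarith) hA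
    have key : (R * x (t - 1) - x t - A * s) * ((g - v) / A) * x (t - 1) < 0 :=
      mul_neg_of_neg_of_pos (mul_neg_of_neg_of_pos hneg h2) (hxpos (t - 1))
    exact ⟨key, key.trans hC⟩
end

section
/- Let R > 0, A > 0, s ∈ ℝ, m ∈ (−1,1), and f₁, f₂ ∈ ℝ. Define the unconstrained clearing deviation x⁰ = (1/(2R))·((1+m)·f₁ + (1−m)·f₂), the clearing deviation when type-1 traders are excluded x¹ = (1/R)·(f₂ − A·s·(1+m)/(1−m)), and the unconstrained type-1 demand z₁ = ((1−m)/2)·(f₁ − f₂)/A + s. Then x¹ − x⁰ = −(A/R)·((1+m)/(1−m))·z₁. In particular, if z₁ < 0 (type-1 traders would go short), then x¹ > x⁰: the price established when type-1 traders are prohibited from going short is strictly higher than the unconstrained price. -/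
/-- From the proof of Lemma 4: the difference between the clearing deviation
when type-1 traders are excluded and the unconstrained clearing deviation
equals `-(A/R)((1+m)/(1-m)) z₁`; in particular if type-1 traders would go
short (`z₁ < 0`), the constrained price is strictly higher. -/
theorem ared_constrained_price_higher
    (R A s m f1 f2 : ℝ) (hR : 0 < R) (hA : 0 < A)
    (hm : m ∈ Set.Ioo (-1 : ℝ) 1)
    (x0 x1 z1 : ℝ)
    (hx0 : x0 = (1 / (2 * R)) * ((1 + m) * f1 + (1 - m) * f2))
    (hx1 : x1 = (1 / R) * (f2 - A * s * (1 + m) / (1 - m)))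
    (hz1 : z1 = ((1 - m) / 2) * (f1 - f2) / A + s) :
    x1 - x0 = -(A / R) * ((1 + m) / (1 - m)) * z1 ∧
      (z1 < 0 → x0 < x1) := by
  obtain ⟨hm1, hm2⟩ := hm
  have h1 : (0:ℝ) < 1 - m := by linarith
  have h2 : (0:ℝ) < 1 + m := by linarith
  have key : x1 - x0 = -(A / R) * ((1 + m) / (1 - m)) * z1 := by
    subst hx0 hx1 hz1
    field_simp
    ring
  refine ⟨key, fun hz => ?_⟩
  have : 0 < -(A / R) * ((1 + m) / (1 - m)) * z1 := by
    apply mul_pos_of_neg_of_neg _ hz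
    · have : 0 < (A / R) * ((1 + m) / (1 - m)) := by positivity
      nlinarith
  linarith [key]
end

section
/- Let R > 1, 0 ≤ v < 1, g > R, A > 0, C > 0, and 0 < s < s_BC := sqrt(C·(g−R)²/(A·(g−v)·(g−1))). Then 1 − (A·s²/C)·(g−v)·(g−1)/(g−R)² ∈ (0,1), so β_BC^{(−)} := (1/C)·log((R−v)/(g−R))·(1 − (A·s²/C)·(g−v)·(g−1)/(g−R)²)^{−1} is well defined; and if moreover g < 2R − v, then β_BC^{(−)} > β_TR := (1/C)·log((R−v)/(g−R)) > 0. -/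
/-- Point 2(d) of Lemma 4: for supply below the threshold
`s_BC = sqrt(C(g-R)²/(A(g-v)(g-1)))` the quantity
`1 - (As²/C)(g-v)(g-1)/(g-R)²` lies in `(0,1)`, so the border-collision value
`β_BC⁻` is well defined, and if moreover `g < 2R - v` then
`β_BC⁻ > β_TR > 0`. -/
theorem ared_betaBC_minus
    (R v g A C s : ℝ) (hR : 1 < R) (hv0 : 0 ≤ v) (hv1 : v < 1)
    (hgR : R < g) (hA : 0 < A) (hC : 0 < C) (hs : 0 < s)
    (hsBC : s < Real.sqrt (C * (g - R) ^ 2 / (A * (g - v) * (g - 1)))) :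
    (1 - (A * s ^ 2 / C) * (g - v) * (g - 1) / (g - R) ^ 2) ∈
        Set.Ioo (0 : ℝ) 1 ∧
      (g < 2 * R - v →
        (0 : ℝ) < (1 / C) * Real.log ((R - v) / (g - R)) ∧
        (1 / C) * Real.log ((R - v) / (g - R)) <
          (1 / C) * Real.log ((R - v) / (g - R)) *
            (1 - (A * s ^ 2 / C) * (g - v) * (g - 1) / (g - R) ^ 2)⁻¹) := by
  have hg1 : 1 < g := hR.trans hgR
  have hgv : 0 < g - v := by linarith
  have hg1' : 0 < g - 1 := by linarith
  have hgR' : 0 < g - R := by linarith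
  have hden : 0 < A * (g - v) * (g - 1) := by positivity
  have hq : 0 < C * (g - R) ^ 2 / (A * (g - v) * (g - 1)) := by positivity
  have hs2 : s ^ 2 < C * (g - R) ^ 2 / (A * (g - v) * (g - 1)) := by
    have := Real.sq_sqrt hq.le
    nlinarith [Real.sqrt_nonneg (C * (g - R) ^ 2 / (A * (g - v) * (g - 1))), hsBC, hs]
  have hkey : A * s ^ 2 * ((g - v) * (g - 1)) < C * (g - R) ^ 2 := by
    rw [lt_div_iff₀ hden] at hs2
    nlinarith [hs2]
  have hT : (A * s ^ 2 / C) * (g - v) * (g - 1) / (g - R) ^ 2 < 1 := by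
    rw [div_lt_one (by positivity)]
    rw [div_mul_eq_mul_div, div_mul_eq_mul_div, div_lt_iff₀ hC]
    nlinarith [hkey]
  have hTpos : 0 < (A * s ^ 2 / C) * (g - v) * (g - 1) / (g - R) ^ 2 := by positivity
  have hmem : (1 - (A * s ^ 2 / C) * (g - v) * (g - 1) / (g - R) ^ 2) ∈
      Set.Ioo (0 : ℝ) 1 := ⟨by linarith, by linarith⟩
  refine ⟨hmem, fun hg2R => ?_⟩
  have hratio : 1 < (R - v) / (g - R) := by
    rw [lt_div_iff₀ hgR']; linarith
  have hlog : 0 < Real.log ((R - v) / (g - R)) := Real.log_pos hratio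
  have hβTR : (0 : ℝ) < (1 / C) * Real.log ((R - v) / (g - R)) := by positivity
  refine ⟨hβTR, ?_⟩
  have hinv : 1 < (1 - (A * s ^ 2 / C) * (g - v) * (g - 1) / (g - R) ^ 2)⁻¹ :=
    (one_lt_inv_iff₀).2 ⟨hmem.1, by linarith⟩
  nlinarith [hβTR, hinv]
end

section
/- Let R > 1, 0 ≤ v < 1, C > 0 and β ≥ 0; set m̄⁰ = tanh(−β·C/2), γ₁ = ((1+m̄⁰)·v + 3·(1−m̄⁰))/(2R), γ₂ = −(1−m̄⁰)/R. Then 1 − γ₁ − γ₂ > 0 and 1 + γ₁ − γ₂ > 0 for every β ≥ 0; consequently neither 1 nor −1 is ever a root of z² − γ₁·z − γ₂, so the fundamental equilibrium can undergo neither a transcritical/saddle-node nor a flip (period-doubling) bifurcation. -/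
lemma tanh_bounds (x : ℝ) (hx : x ≤ 0) : -1 < Real.tanh x ∧ Real.tanh x ≤ 0 := by
  have hc : 0 < Real.cosh x := Real.cosh_pos x
  have hs : Real.sinh x ≤ 0 := Real.sinh_nonpos_iff.2 hx
  have he : 0 < Real.exp x := Real.exp_pos x
  have hsum : Real.sinh x + Real.cosh x = Real.exp x := Real.sinh_add_cosh x
  rw [Real.tanh_eq_sinh_div_cosh]
  constructor
  · rw [neg_lt, ← neg_div]
    exact (div_lt_one hc).2 (by linarith)
  · exact div_nonpos_of_nonpos_of_nonneg hs hc.le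

/-- Exclusion steps in the proof of Lemma 5: with
`γ₁ = ((1+m̄⁰)v + 3(1-m̄⁰))/(2R)` and `γ₂ = -(1-m̄⁰)/R`,
`m̄⁰ = tanh(-βC/2)`, both `1 - γ₁ - γ₂ > 0` and `1 + γ₁ - γ₂ > 0`; hence
neither `1` nor `-1` is a root of `z² - γ₁ z - γ₂`, ruling out
transcritical/saddle-node and flip bifurcations of the fundamental
equilibrium. -/
theorem ared_roc_no_fold_no_flip
    (R v C β : ℝ) (hR : 1 < R) (hv0 : 0 ≤ v) (hv1 : v < 1)
    (hC : 0 < C) (hβ : 0 ≤ β)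
    (mb γ1 γ2 : ℝ)
    (hmb : mb = Real.tanh (-β * C / 2))
    (hγ1 : γ1 = ((1 + mb) * v + 3 * (1 - mb)) / (2 * R))
    (hγ2 : γ2 = -(1 - mb) / R) :
    0 < 1 - γ1 - γ2 ∧ 0 < 1 + γ1 - γ2 ∧
      (1 : ℝ) ^ 2 - γ1 * 1 - γ2 ≠ 0 ∧
      (-1 : ℝ) ^ 2 - γ1 * (-1) - γ2 ≠ 0 := by
  have hx : -β * C / 2 ≤ 0 := by nlinarith
  obtain ⟨h1, h2⟩ := tanh_bounds _ hx
  rw [← hmb] at h1 h2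
  have hR0 : (0:ℝ) < R := by linarith
  have key1 : (1+mb)*v + (1-mb) < 2*R := by nlinarith
  have e1 : 0 < 1 - γ1 - γ2 := by
    rw [hγ1, hγ2]
    have h2R : (0:ℝ) < 2*R := by linarith
    rw [sub_sub, div_add_div _ _ (ne_of_gt h2R) (ne_of_gt hR0), lt_sub_iff_add_lt, zero_add, div_lt_one (mul_pos h2R hR0)]
    ring_nf
    nlinarith
  have e2 : 0 < 1 + γ1 - γ2 := by
    rw [hγ1, hγ2]
    have : 0 < ((1 + mb) * v + 3 * (1 - mb)) / (2 * R) := by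
      apply div_pos (by nlinarith) (by linarith)
    have : 0 ≤ (1 - mb) / R := div_nonneg (by linarith) (by linarith)
    nlinarith
  refine ⟨e1, e2, by nlinarith, by nlinarith⟩
end
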